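/- arXiv:2106.10008 — 6 statements merged into one kernel-verified Lean document; each statement's English description precedes it below -/
import Mathlib

section
/- Assume additionally that W is nonzero and that, whenever c is even, m denotes the least odd positive integer with alpha_m(W) = 1 (which exists). Then at least one of the following holds: (1) c = a+b; (2) c = a+b+1 and c is odd; (3) c is even and c + m = a+b; (4) c is even, m >= 3 and c + m = a+b+1. (This is the contrapositive form of Theorem 1.1: for a prime p = 2h+1 >= 5 and a Mersenne prime M outside the exceptional set Sigma_p, the polynomial phi_p(M) = sigma(M^(p-1)) is divisible by an irreducible polynomial which is not a Mersenne prime.) -/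
open Polynomial

/-- `alpha l S` is the coefficient of `x^(deg S - l)` in `S`. -/
noncomputable def alpha (l : ℕ) (S : Polynomial (ZMod 2)) : ZMod 2 :=
  S.coeff (S.natDegree - l)

/-- `sigmaPow P n = 1 + P + ⋯ + P^n`, the sum of divisors of `P^n` for `P` irreducible. -/
noncomputable def sigmaPow (P : Polynomial (ZMod 2)) (n : ℕ) : Polynomial (ZMod 2) :=
  ∑ i ∈ Finset.range (n + 1), P ^ i

lemma sq_coeff_odd (p : Polynomial (ZMod 2)) {k : ℕ} (hk : ¬ (2 ∣ k)) : (p ^ 2).coeff k = 0 := by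
  rw [← Polynomial.map_frobenius_expand 2, Polynomial.coeff_map, Polynomial.coeff_expand (by norm_num),
    if_neg hk, map_zero]

lemma sigmaPow_succ (M : Polynomial (ZMod 2)) (n : ℕ) :
    sigmaPow M (n+1) = sigmaPow M n + M^(n+1) :=
  Finset.sum_range_succ _ _

lemma sigmaPow_succ' (M : Polynomial (ZMod 2)) (n : ℕ) :
    sigmaPow M (n+1) = 1 + M * sigmaPow M n := by
  rw [sigmaPow, sigmaPow, Finset.sum_range_succ', Finset.mul_sum]
  simp [pow_succ', add_comm]

lemma sigmaPow_monic {M : Polynomial (ZMod 2)} (hM : M.Monic) (hd : 0 < M.natDegree) :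
    ∀ n, (sigmaPow M n).Monic ∧ (sigmaPow M n).natDegree = n * M.natDegree := by
  intro n
  induction n with
  | zero => constructor <;> simp [sigmaPow]
  | succ n ih =>
    have hpow : (M ^ (n+1)).Monic := hM.pow _
    have hdn : (M ^ (n+1)).natDegree = (n+1) * M.natDegree := hM.natDegree_pow _
    have hlt : (sigmaPow M n).natDegree < (M ^ (n+1)).natDegree := by
      rw [ih.2, hdn]; exact (Nat.mul_lt_mul_right hd).mpr (Nat.lt_succ_self n)
    have hdeg : (sigmaPow M n).degree < (M ^ (n+1)).degree :=
      Polynomial.degree_lt_degree hlt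
    refine ⟨?_, ?_⟩
    · rw [sigmaPow_succ]; exact hpow.add_of_right hdeg
    · rw [sigmaPow_succ, Polynomial.natDegree_add_eq_right_of_natDegree_lt hlt, hdn]

lemma sigmaPow_odd (M : Polynomial (ZMod 2)) (n : ℕ) :
    sigmaPow M (2*n+1) = (1+M) * (sigmaPow M n)^2 := by
  have h2 : (2 : Polynomial (ZMod 2)) = 0 := CharTwo.two_eq_zero
  induction n with
  | zero => simp [sigmaPow, Finset.sum_range_succ]
  | succ n ih =>
    have e1 : 2*(n+1)+1 = (2*n+1) + 1 + 1 := by ring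
    rw [e1, sigmaPow_succ, sigmaPow_succ, ih, sigmaPow_succ]
    have e2 : M ^ (2*n+1+1) = (M^(n+1))^2 := by
      rw [show 2*n+1+1 = (n+1)*2 by ring, pow_mul]
    have e3 : M ^ (2*n+1+1+1) = (M^(n+1))^2 * M := by
      rw [show 2*n+1+1+1 = (n+1)*2+1 by ring, pow_succ, pow_mul]
    rw [e2, e3]
    linear_combination (-(1+M) * (sigmaPow M n) * M^(n+1)) * h2

lemma X_add_one_monic : (X + 1 : Polynomial (ZMod 2)).Monic := by
  simpa using monic_X_add_C (1 : ZMod 2)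

lemma X_add_one_natDegree : (X + 1 : Polynomial (ZMod 2)).natDegree = 1 := by
  simpa using natDegree_X_add_C (1 : ZMod 2)

lemma xy_monic (a b : ℕ) :
    (X ^ a * (X + 1) ^ b : Polynomial (ZMod 2)).Monic ∧
    (X ^ a * (X + 1) ^ b : Polynomial (ZMod 2)).natDegree = a + b := by
  refine ⟨(monic_X_pow a).mul (X_add_one_monic.pow b), ?_⟩
  rw [(monic_X_pow a).natDegree_mul (X_add_one_monic.pow b), natDegree_X_pow,
    X_add_one_monic.natDegree_pow, X_add_one_natDegree, mul_one]

lemma mers_monic (a b : ℕ) (hab : 1 ≤ a + b) :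
    (1 + X ^ a * (X + 1) ^ b : Polynomial (ZMod 2)).Monic ∧
    (1 + X ^ a * (X + 1) ^ b : Polynomial (ZMod 2)).natDegree = a + b := by
  obtain ⟨hmon, hdeg⟩ := xy_monic a b
  have hlt : (1 : Polynomial (ZMod 2)).degree <
      (X ^ a * (X + 1) ^ b : Polynomial (ZMod 2)).degree := by
    rw [Polynomial.degree_one, Polynomial.degree_eq_natDegree hmon.ne_zero, hdeg]
    exact_mod_cast hab
  constructor
  · have := hmon.add_of_left hlt; rwa [add_comm] at this
  · rw [add_comm, Polynomial.natDegree_add_eq_left_of_degree_lt hlt, hdeg]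


lemma coeff_odd_of_sq_add (W E F : Polynomial (ZMod 2)) (key : W = E^2 + F)
    {j : ℕ} (hj : ¬ (2 ∣ j)) : W.coeff j = F.coeff j := by
  rw [key, Polynomial.coeff_add, sq_coeff_odd E hj, zero_add]

lemma not_both_even (a b : ℕ) (M : Polynomial (ZMod 2))
    (hM : M = 1 + X ^ a * (X + 1) ^ b) (hMirr : Irreducible M) :
    a % 2 = 1 ∨ b % 2 = 1 := by
  have h2 : (2 : Polynomial (ZMod 2)) = 0 := CharTwo.two_eq_zero
  by_contra hcon
  push_neg at hcon
  obtain ⟨h1, h2'⟩ := hcon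
  obtain ⟨a', ha'⟩ : ∃ a', a = 2 * a' := ⟨a / 2, by omega⟩
  obtain ⟨b', hb'⟩ : ∃ b', b = 2 * b' := ⟨b / 2, by omega⟩
  apply hMirr.not_isSquare
  refine ⟨1 + X ^ a' * (X + 1) ^ b', ?_⟩
  rw [hM, ha', hb', show 2*a' = a'*2 by ring, show 2*b' = b'*2 by ring,
    pow_mul, pow_mul]
  linear_combination (-(X ^ a' * (X + 1) ^ b')) * h2

lemma F_nextCoeff (a b e0 : ℕ) (ha : 1 ≤ a) (hb : 1 ≤ b) (he0 : 1 ≤ e0)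
    (Q : Polynomial (ZMod 2)) (hQmon : Q.Monic) (hQdeg : Q.natDegree = e0) :
    ((X ^ a * (X + 1) ^ b : Polynomial (ZMod 2)) * Q^2).nextCoeff = (b : ZMod 2) := by
  have hXa : (X^a : Polynomial (ZMod 2)).nextCoeff = 0 := by
    rw [Polynomial.nextCoeff_of_natDegree_pos (by rw [natDegree_X_pow]; omega),
      natDegree_X_pow, Polynomial.coeff_X_pow, if_neg (by omega)]
  have hXbdeg : ((X+1)^b : Polynomial (ZMod 2)).natDegree = b := by
    rw [X_add_one_monic.natDegree_pow, X_add_one_natDegree, mul_one]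
  have hXb : ((X+1)^b : Polynomial (ZMod 2)).nextCoeff = (b : ZMod 2) := by
    rw [Polynomial.nextCoeff_of_natDegree_pos (by omega), hXbdeg,
      Polynomial.coeff_X_add_one_pow, Nat.choose_symm hb, Nat.choose_one_right]
  have hQ2deg : (Q^2).natDegree = 2*e0 := by
    rw [hQmon.natDegree_pow, hQdeg]
  have hQ2next : (Q^2).nextCoeff = 0 := by
    rw [Polynomial.nextCoeff_of_natDegree_pos (by rw [hQ2deg]; omega), hQ2deg]
    exact sq_coeff_odd Q (by omega)
  have hymon := (xy_monic a b).1
  rw [hymon.nextCoeff_mul (hQmon.pow 2),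
    (monic_X_pow a).nextCoeff_mul (X_add_one_monic.pow b), hXa, hXb, hQ2next, zero_add, add_zero]

lemma W_deg_lt (W E F : Polynomial (ZMod 2)) (D e1 : ℕ) (key : W = E^2 + F)
    (hE : E.natDegree ≤ e1 - 1) (hF : F.natDegree = D - (a' + b'))
    (hDe1 : D = 2 * e1) (he1 : 5 ≤ e1) (hab : 1 ≤ a' + b') (a' b' : ℕ) :
    W.natDegree < D := by
  have h1 : W.natDegree ≤ max ((E^2).natDegree) F.natDegree := by
    rw [key]; exact Polynomial.natDegree_add_le _ _
  have h3 : (E^2).natDegree ≤ 2 * E.natDegree := Polynomial.natDegree_pow_le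
  rcases max_cases ((E^2).natDegree) F.natDegree with ⟨hmx, _⟩ | ⟨hmx, _⟩ <;> omega

set_option maxHeartbeats 1000000 in
lemma endgame (a b c m : ℕ) (W F : Polynomial (ZMod 2)) (D : ℕ)
    (hab5 : 5 ≤ a + b) (hDbig : 2*(a+b)+2 ≤ D)
    (hsc : W.natDegree + c = D)
    (hW0 : W ≠ 0)
    (hm : Even c → Odd m ∧ 0 < m ∧ alpha m W = 1 ∧
      ∀ k, Odd k → 0 < k → alpha k W = 1 → m ≤ k)
    (hodd : ∀ l, l % 2 = 1 → l ≤ D → W.coeff (D - l) = F.coeff (D - l))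
    (hFtop : ∀ l, l < a + b → F.coeff (D - l) = 0)
    (hF1 : F.coeff (D - (a+b)) = 1)
    (hFnext : F.coeff (D - (a+b) - 1) = (b : ZMod 2))
    (hpar : a % 2 = 1 ∨ b % 2 = 1) :
    c = a + b ∨
    (c = a + b + 1 ∧ Odd c) ∨
    (Even c ∧ c + m = a + b) ∨
    (Even c ∧ 3 ≤ m ∧ c + m = a + b + 1) := by
  -- the pivot odd position l0
  obtain ⟨l0, hl0odd, hl0ge, hl0le, hl0coeff⟩ :
      ∃ l0, l0 % 2 = 1 ∧ a + b ≤ l0 ∧ l0 ≤ a + b + 1 ∧ W.coeff (D - l0) = 1 := by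
    rcases Nat.even_or_odd (a + b) with hab | hab
    · have hab2 := Nat.even_iff.mp hab
      have hb2 : b % 2 = 1 := by
        rcases hpar with h' | h' <;> omega
      have hbcast : (b : ZMod 2) = 1 := by
        rw [← ZMod.natCast_mod, hb2, Nat.cast_one]
      refine ⟨a+b+1, by omega, by omega, le_refl _, ?_⟩
      rw [hodd _ (by omega) (by omega), show D - (a+b+1) = D - (a+b) - 1 by omega, hFnext, hbcast]
    · have hab2 := Nat.odd_iff.mp hab
      exact ⟨a+b, by omega, le_refl _, by omega, by rw [hodd _ (by omega) (by omega)]; exact hF1⟩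
  have hcle : c ≤ l0 := by
    have := Polynomial.le_natDegree_of_ne_zero (n := D - l0) (p := W)
      (by rw [hl0coeff]; exact one_ne_zero)
    omega
  have hmin : ∀ l, l % 2 = 1 → l ≤ D → W.coeff (D - l) ≠ 0 → a + b ≤ l := by
    intro l hl hlD hne
    by_contra hcon
    exact hne (by rw [hodd l hl hlD]; exact hFtop l (by omega))
  have hWlead : W.coeff W.natDegree = 1 := by
    have h1 : W.leadingCoeff ≠ 0 := Polynomial.leadingCoeff_ne_zero.mpr hW0
    have h2' : ∀ x : ZMod 2, x ≠ 0 → x = 1 := by decide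
    exact h2' _ h1
  rcases Nat.even_or_odd c with hce | hco
  · -- c even
    obtain ⟨hmodd, hmpos, hmalpha, hmmin⟩ := hm hce
    have hce2 := Nat.even_iff.mp hce
    have hm2 := Nat.odd_iff.mp hmodd
    have hcltl0 : c < l0 := by omega
    have halpha0 : alpha (l0 - c) W = 1 := by
      unfold alpha
      rw [show W.natDegree - (l0 - c) = D - l0 by omega, hl0coeff]
    have hmle : m ≤ l0 - c := hmmin _ (Nat.odd_iff.mpr (by omega)) (by omega) halpha0
    have hcm : W.coeff (D - (c + m)) = 1 := by
      have e : W.natDegree - m = D - (c + m) := by omega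
      have := hmalpha
      unfold alpha at this
      rwa [e] at this
    have habcm : a + b ≤ c + m :=
      hmin (c+m) (by omega) (by omega) (by rw [hcm]; exact one_ne_zero)
    rcases (show c + m = a + b ∨ c + m = a + b + 1 by omega) with h' | h'
    · exact Or.inr (Or.inr (Or.inl ⟨hce, h'⟩))
    · rcases (show m = 1 ∨ 3 ≤ m by omega) with hm1 | hm3
      · exact Or.inl (by omega)
      · exact Or.inr (Or.inr (Or.inr ⟨hce, hm3, h'⟩))
  · -- c odd
    have hco2 := Nat.odd_iff.mp hco
    have hcalpha : W.coeff (D - c) = 1 := by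
      rw [show D - c = W.natDegree by omega]; exact hWlead
    have habc : a + b ≤ c :=
      hmin c (by omega) (by omega) (by rw [hcalpha]; exact one_ne_zero)
    rcases (show c = a + b ∨ c = a + b + 1 by omega) with h' | h'
    · exact Or.inl h'
    · exact Or.inr (Or.inl ⟨h', hco⟩)

set_option maxHeartbeats 1000000 in
theorem stmt_0
    (h a b : ℕ) (hh : 2 ≤ h) (hp : Nat.Prime (2 * h + 1))
    (ha : 1 ≤ a) (hb : 1 ≤ b) (hab5 : 5 ≤ a + b)
    (M : Polynomial (ZMod 2)) (hM : M = 1 + X ^ a * (X + 1) ^ b)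
    (hMirr : Irreducible M)
    (J : Finset ℕ) (aj bj : ℕ → ℕ)
    (haj : ∀ j ∈ J, 1 ≤ aj j) (hbj : ∀ j ∈ J, 1 ≤ bj j)
    (hMjirr : ∀ j ∈ J, Irreducible (1 + X ^ aj j * (X + 1) ^ bj j : Polynomial (ZMod 2)))
    (hdistinct : ∀ i ∈ J, ∀ j ∈ J, i ≠ j →
      (1 + X ^ aj i * (X + 1) ^ bj i : Polynomial (ZMod 2)) ≠
        1 + X ^ aj j * (X + 1) ^ bj j)
    (hfact : sigmaPow M (2 * h) = ∏ j ∈ J, (1 + X ^ aj j * (X + 1) ^ bj j))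
    (u v : ℕ) (hu : u = ∑ j ∈ J, aj j) (hv : v = ∑ j ∈ J, bj j)
    (hueven : Even u) (hveven : Even v)
    (U W R : Polynomial (ZMod 2)) (c : ℕ)
    (hU : U = X ^ u * (X + 1) ^ v)
    (hW : W = U + sigmaPow M (2 * h) + 1)
    (hc : c = 2 * h * (a + b) - W.natDegree)
    (hR : R = sigmaPow M (2 * h - 1) + W)
    (hW0 : W ≠ 0) (m : ℕ)
    (hm : Even c → Odd m ∧ 0 < m ∧ alpha m W = 1 ∧
      ∀ k, Odd k → 0 < k → alpha k W = 1 → m ≤ k) :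
    c = a + b ∨
    (c = a + b + 1 ∧ Odd c) ∨
    (Even c ∧ c + m = a + b) ∨
    (Even c ∧ 3 ≤ m ∧ c + m = a + b + 1) := by
  classical
  obtain ⟨k, rfl⟩ : ∃ k, h = k + 2 := ⟨h - 2, by omega⟩
  have h2 : (2 : Polynomial (ZMod 2)) = 0 := CharTwo.two_eq_zero
  obtain ⟨e0, he0⟩ : ∃ e0, (k+1) * (a+b) = e0 := ⟨_, rfl⟩
  obtain ⟨e1, he1⟩ : ∃ e1, (k+2) * (a+b) = e1 := ⟨_, rfl⟩
  obtain ⟨D, hD⟩ : ∃ D, 2 * (k+2) * (a+b) = D := ⟨_, rfl⟩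
  have hDe1 : D = 2 * e1 := by rw [← hD, ← he1]; ring
  have he01 : e1 = e0 + (a+b) := by rw [← he0, ← he1]; ring
  have hb3 : 5 ≤ e0 := by
    rw [← he0]; exact le_trans hab5 (Nat.le_mul_of_pos_left _ (by omega))
  rw [hD] at hc
  obtain ⟨y, hydef⟩ : ∃ y : Polynomial (ZMod 2), y = X ^ a * (X + 1) ^ b := ⟨_, rfl⟩
  rw [← hydef] at hM
  have hymon : y.Monic := by rw [hydef]; exact (xy_monic a b).1
  have hydeg : y.natDegree = a + b := by rw [hydef]; exact (xy_monic a b).2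
  obtain ⟨hMmon, hMdeg⟩ : M.Monic ∧ M.natDegree = a + b := by
    rw [hM, hydef]; exact mers_monic a b (by omega)
  have hMdpos : 0 < M.natDegree := by omega
  have hTdeg : (sigmaPow M (2*(k+2))).natDegree = D := by
    rw [(sigmaPow_monic hMmon hMdpos (2*(k+2))).2, hMdeg, ← hD]
  -- u + v = D
  have huv : u + v = D := by
    have h1 : (∏ j ∈ J, (1 + X ^ aj j * (X + 1) ^ bj j : Polynomial (ZMod 2))).natDegree
        = ∑ j ∈ J, (aj j + bj j) := by
      rw [Polynomial.natDegree_prod_of_monic _ _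
        (fun j hj => (mers_monic _ _ (by have := haj j hj; omega)).1)]
      exact Finset.sum_congr rfl fun j hj => (mers_monic _ _ (by have := haj j hj; omega)).2
    rw [hu, hv, ← Finset.sum_add_distrib, ← h1, ← hfact, hTdeg]
  obtain ⟨u', hu'⟩ := hueven
  obtain ⟨v', hv'⟩ := hveven
  obtain ⟨Q, hQdef⟩ : ∃ Q : Polynomial (ZMod 2), Q = sigmaPow M (k+1) := ⟨_, rfl⟩
  have hQmon : Q.Monic := by rw [hQdef]; exact (sigmaPow_monic hMmon hMdpos (k+1)).1
  have hQdeg : Q.natDegree = e0 := by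
    rw [hQdef, (sigmaPow_monic hMmon hMdpos (k+1)).2, hMdeg, he0]
  obtain ⟨P, hPdef⟩ : ∃ P : Polynomial (ZMod 2), P = X ^ u' * (X + 1) ^ v' := ⟨_, rfl⟩
  have hPmon : P.Monic := by rw [hPdef]; exact (xy_monic u' v').1
  have hPdeg : P.natDegree = e1 := by rw [hPdef, (xy_monic u' v').2]; omega
  obtain ⟨E, hEdef⟩ : ∃ E : Polynomial (ZMod 2), E = P + y * Q := ⟨_, rfl⟩
  obtain ⟨F, hFdef⟩ : ∃ F : Polynomial (ZMod 2), F = y * Q^2 := ⟨_, rfl⟩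
  -- the key identity
  have hTid : sigmaPow M (2*(k+2)) = 1 + M * ((1+M) * Q^2) := by
    rw [hQdef, show 2*(k+2) = (2*(k+1)+1)+1 by ring, sigmaPow_succ', sigmaPow_odd]
  have hUP : U = P^2 := by
    rw [hU, hPdef, hu', hv', pow_add, pow_add]; ring
  have key : W = E^2 + F := by
    rw [hW, hTid, hUP, hEdef, hFdef, hM]
    linear_combination (1 + Q^2 + y*Q^2 - P*y*Q) * h2
  -- degrees of F
  have hFmon : F.Monic := by rw [hFdef]; exact hymon.mul (hQmon.pow 2)
  have hFdeg : F.natDegree = D - (a+b) := by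
    rw [hFdef, hymon.natDegree_mul (hQmon.pow 2), hydeg, hQmon.natDegree_pow, hQdeg]
    omega
  -- degree of E
  have hyQmon : (y*Q).Monic := hymon.mul hQmon
  have hyQdeg : (y*Q).natDegree = e1 := by
    rw [hymon.natDegree_mul hQmon, hydeg, hQdeg]; omega
  have hEcoeff : E.coeff e1 = 0 := by
    rw [hEdef, Polynomial.coeff_add]
    have c1 : P.coeff e1 = 1 := by rw [← hPdeg]; exact hPmon.coeff_natDegree
    have c2 : (y*Q).coeff e1 = 1 := by rw [← hyQdeg]; exact hyQmon.coeff_natDegree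
    rw [c1, c2]; decide
  have hEdeg : E.natDegree ≤ e1 - 1 := by
    have hEle : E.natDegree ≤ e1 := by
      rw [hEdef]
      refine le_trans (Polynomial.natDegree_add_le _ _) ?_
      rw [hPdeg, hyQdeg]; simp
    rcases eq_or_ne E 0 with h0 | h0
    · simp [h0]
    rcases lt_or_eq_of_le hEle with hlt | heq
    · omega
    · exfalso
      have hlc : E.coeff E.natDegree ≠ 0 := fun hh' => h0 (Polynomial.leadingCoeff_eq_zero.mp hh')
      rw [heq] at hlc
      exact hlc hEcoeff
  -- W has degree < D
  have hsD : W.natDegree < D := W_deg_lt W E F D e1 key hEdeg hFdeg hDe1 (by omega) (by omega) a b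
  have hsc : W.natDegree + c = D := by omega
  -- coefficients of W at odd positions come from F
  have hodd : ∀ l, l % 2 = 1 → l ≤ D → W.coeff (D - l) = F.coeff (D - l) := fun l hl hlD =>
    coeff_odd_of_sq_add W E F key (by omega)
  have hFtop : ∀ l, l < a + b → F.coeff (D - l) = 0 := fun l hl =>
    Polynomial.coeff_eq_zero_of_natDegree_lt (by rw [hFdeg]; omega)
  have hF1 : F.coeff (D - (a+b)) = 1 := by
    have := hFmon.coeff_natDegree; rwa [hFdeg] at this
  have hpar : a % 2 = 1 ∨ b % 2 = 1 := not_both_even a b M (by rw [hM, hydef]) hMirr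
  have hFnext : F.coeff (D - (a+b) - 1) = (b : ZMod 2) := by
    have h1 : F.nextCoeff = (b : ZMod 2) := by
      rw [hFdef, hydef]
      exact F_nextCoeff a b e0 ha hb (by omega) Q hQmon hQdeg
    rw [Polynomial.nextCoeff_of_natDegree_pos (by rw [hFdeg]; omega), hFdeg] at h1
    exact h1
  clear hTid hUP hW hU hfact hdistinct hMjirr hR hp hu hv hydef hQdef hPdef hEdef hFdef
  clear hymon hydeg hQmon hQdeg hPmon hPdeg hyQmon hyQdeg hEcoeff hEdeg hFmon
  clear hMmon hMdeg hMdpos hTdeg hMirr hM haj hbj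
  exact endgame a b c m W F D hab5 (by omega) hsc hW0 hm hodd hFtop hF1 hFnext hpar
end

section
/- Let M = 1 + x^a(x+1)^b be a Mersenne prime and let h >= 1 be an integer. Then alpha_l(sigma(M^(2h))) = alpha_l(M^(2h)) for every l with 1 <= l <= a+b-1, and alpha_l(sigma(M^(2h))) = alpha_l(M^(2h) + M^(2h-1)) for every l with a+b <= l <= 2(a+b)-1. -/
open Polynomial

theorem stmt_2
    (a b h : ℕ) (ha : 1 ≤ a) (hb : 1 ≤ b) (hh : 1 ≤ h)
    (M : Polynomial (ZMod 2)) (hM : M = 1 + X ^ a * (X + 1) ^ b)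
    (hMirr : Irreducible M) :
    (∀ l, 1 ≤ l → l ≤ a + b - 1 →
      alpha l (sigmaPow M (2 * h)) = alpha l (M ^ (2 * h))) ∧
    (∀ l, a + b ≤ l → l ≤ 2 * (a + b) - 1 →
      alpha l (sigmaPow M (2 * h)) = alpha l (M ^ (2 * h) + M ^ (2 * h - 1))) := by
  have hd2 : 2 ≤ a + b := by omega
  have hx1 : (X + 1 : Polynomial (ZMod 2)).Monic := by
    simpa using monic_X_add_C (1 : ZMod 2)
  have hmon1 : (X ^ a * (X + 1) ^ b : Polynomial (ZMod 2)).Monic :=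
    (monic_X_pow a).mul (hx1.pow b)
  have hx1d : (X + 1 : Polynomial (ZMod 2)).natDegree = 1 := by
    simpa using natDegree_X_add_C (1 : ZMod 2)
  have hdeg1 : (X ^ a * (X + 1) ^ b : Polynomial (ZMod 2)).natDegree = a + b := by
    rw [(monic_X_pow a).natDegree_mul (hx1.pow b), natDegree_X_pow,
      hx1.natDegree_pow, hx1d, mul_one]
  have hMd : M.natDegree = a + b := by
    rw [hM, natDegree_add_eq_right_of_natDegree_lt, hdeg1]
    rw [natDegree_one, hdeg1]; omega
  have hMn : ∀ n : ℕ, (M ^ n).natDegree = n * (a + b) := fun n => by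
    rw [natDegree_pow, hMd]
  -- degree bound for partial sums
  have hTle : ∀ n : ℕ, (∑ i ∈ Finset.range n, M ^ i).natDegree ≤ (n - 1) * (a + b) := by
    intro n
    apply natDegree_sum_le_of_forall_le
    intro i hi
    rw [hMn]
    exact Nat.mul_le_mul_right _ (by simp at hi; omega)
  set d := a + b with hdd
  -- key product facts for omega
  have hp1 : (2 * h - 1) * d = 2 * h * d - d := by rw [Nat.sub_mul, one_mul]
  have hp2 : (2 * h - 2) * d = 2 * h * d - 2 * d := by rw [Nat.sub_mul]
  have hp3 : 2 * d ≤ 2 * h * d :=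
    Nat.mul_le_mul (by omega) le_rfl
  -- decompose sigmaPow
  have hsplit : sigmaPow M (2 * h)
      = (∑ i ∈ Finset.range (2 * h), M ^ i) + M ^ (2 * h) := by
    rw [sigmaPow, Finset.sum_range_succ]
  have hsplit2 : (∑ i ∈ Finset.range (2 * h), M ^ i)
      = (∑ i ∈ Finset.range (2 * h - 1), M ^ i) + M ^ (2 * h - 1) := by
    have : 2 * h = (2 * h - 1) + 1 := by omega
    rw [this, Finset.sum_range_succ]
    simp
  have hSd : (sigmaPow M (2 * h)).natDegree = 2 * h * d := by
    rw [hsplit, natDegree_add_eq_right_of_natDegree_lt, hMn]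
    rw [hMn]
    exact lt_of_le_of_lt (hTle _) (by omega)
  constructor
  · intro l hl1 hl2
    have hk : (2 * h - 1) * d < 2 * h * d - l := by omega
    unfold alpha
    rw [hSd, hMn, hsplit, coeff_add,
      coeff_eq_zero_of_natDegree_lt (lt_of_le_of_lt (hTle _) hk), zero_add]
  · intro l hl1 hl2
    have hk : (2 * h - 2) * d < 2 * h * d - l := by omega
    have hRd : (M ^ (2 * h) + M ^ (2 * h - 1)).natDegree = 2 * h * d := by
      rw [natDegree_add_eq_left_of_natDegree_lt, hMn]
      rw [hMn, hMn]; omega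
    unfold alpha
    have hU := hTle (2 * h - 1)
    have he : 2 * h - 1 - 1 = 2 * h - 2 := by omega
    rw [he] at hU
    rw [hSd, hRd, hsplit, hsplit2, coeff_add, coeff_add, coeff_add,
      coeff_eq_zero_of_natDegree_lt (lt_of_le_of_lt hU hk), zero_add]
    ring
end

section
/- The polynomial R = sigma(M^(2h-1)) + W is a square, i.e. R = A^2 for some A in F_2[x]. Moreover, assuming in addition that sigma(M^(2h-2)) is not a square, the polynomial M^(2h-1) + W is not a square. -/
open Polynomial

theorem stmt_4
    (h a b : ℕ) (hh : 2 ≤ h) (hp : Nat.Prime (2 * h + 1))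
    (ha : 1 ≤ a) (hb : 1 ≤ b) (hab5 : 5 ≤ a + b)
    (M : Polynomial (ZMod 2)) (hM : M = 1 + X ^ a * (X + 1) ^ b)
    (hMirr : Irreducible M)
    (J : Finset ℕ) (aj bj : ℕ → ℕ)
    (haj : ∀ j ∈ J, 1 ≤ aj j) (hbj : ∀ j ∈ J, 1 ≤ bj j)
    (hMjirr : ∀ j ∈ J, Irreducible (1 + X ^ aj j * (X + 1) ^ bj j : Polynomial (ZMod 2)))
    (hdistinct : ∀ i ∈ J, ∀ j ∈ J, i ≠ j →
      (1 + X ^ aj i * (X + 1) ^ bj i : Polynomial (ZMod 2)) ≠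
        1 + X ^ aj j * (X + 1) ^ bj j)
    (hfact : sigmaPow M (2 * h) = ∏ j ∈ J, (1 + X ^ aj j * (X + 1) ^ bj j))
    (u v : ℕ) (hu : u = ∑ j ∈ J, aj j) (hv : v = ∑ j ∈ J, bj j)
    (hueven : Even u) (hveven : Even v)
    (U W R : Polynomial (ZMod 2)) (c : ℕ)
    (hU : U = X ^ u * (X + 1) ^ v)
    (hW : W = U + sigmaPow M (2 * h) + 1)
    (hc : c = 2 * h * (a + b) - W.natDegree)
    (hR : R = sigmaPow M (2 * h - 1) + W)
    : (∃ A : Polynomial (ZMod 2), R = A ^ 2) ∧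
      ((¬ ∃ A : Polynomial (ZMod 2), sigmaPow M (2 * h - 2) = A ^ 2) →
        ¬ ∃ A : Polynomial (ZMod 2), M ^ (2 * h - 1) + W = A ^ 2) := by
  -- Key decompositions of sigmaPow
  have hsig1 : sigmaPow M (2 * h) = sigmaPow M (2 * h - 1) + M ^ (2 * h) := by
    conv_lhs => rw [sigmaPow]
    rw [show 2 * h + 1 = (2 * h - 1 + 1) + 1 by omega, Finset.sum_range_succ,
      show 2 * h - 1 + 1 = 2 * h by omega, sigmaPow,
      show 2 * h - 1 + 1 = 2 * h by omega]
  have hsig2 : sigmaPow M (2 * h) = sigmaPow M (2 * h - 2) + M ^ (2 * h - 1) + M ^ (2 * h) := by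
    conv_lhs => rw [sigmaPow]
    rw [show 2 * h + 1 = ((2 * h - 2 + 1) + 1) + 1 by omega, Finset.sum_range_succ,
      Finset.sum_range_succ, show 2 * h - 2 + 1 + 1 = 2 * h by omega,
      show 2 * h - 2 + 1 = 2 * h - 1 by omega, sigmaPow,
      show 2 * h - 2 + 1 = 2 * h - 1 by omega]
  obtain ⟨k, hk⟩ := hueven
  obtain ⟨l, hl⟩ := hveven
  have hT : (X ^ k * (X + 1) ^ l : Polynomial (ZMod 2)) ^ 2 = U := by
    rw [hU, hk, hl]; ring
  have hMh : (M ^ h) ^ 2 = M ^ (2 * h) := by rw [← pow_mul]; ring_nf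
  constructor
  · refine ⟨X ^ k * (X + 1) ^ l + M ^ h + 1, ?_⟩
    have expand : R = (sigmaPow M (2 * h - 1) + sigmaPow M (2 * h - 1)) +
        (U + M ^ (2 * h) + 1) := by
      rw [hR, hW, hsig1]; ring
    rw [expand, CharTwo.add_self_eq_zero, zero_add,
      CharTwo.add_sq, CharTwo.add_sq, one_pow, hT, hMh]
  · rintro hns ⟨A, hA⟩
    apply hns
    refine ⟨A + X ^ k * (X + 1) ^ l + M ^ h + 1, ?_⟩
    have expand : (A + X ^ k * (X + 1) ^ l + M ^ h + 1) ^ 2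
        = A ^ 2 + U + M ^ (2 * h) + 1 := by
      rw [CharTwo.add_sq, CharTwo.add_sq, CharTwo.add_sq, one_pow, hT, hMh]
    rw [expand, ← hA, hW, hsig2]
    have final : M ^ (2 * h - 1) + (U + (sigmaPow M (2 * h - 2) + M ^ (2 * h - 1)
        + M ^ (2 * h)) + 1) + U + M ^ (2 * h) + 1
        = sigmaPow M (2 * h - 2) + (M ^ (2 * h - 1) + M ^ (2 * h - 1))
          + (U + U) + (M ^ (2 * h) + M ^ (2 * h)) + ((1 : Polynomial (ZMod 2)) + 1) := by
      ring
    rw [final, CharTwo.add_self_eq_zero, CharTwo.add_self_eq_zero,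
      CharTwo.add_self_eq_zero, CharTwo.add_self_eq_zero, add_zero, add_zero,
      add_zero, add_zero]
end

section
/- Assume W is nonzero, and let m be an odd positive integer. Then: if c = a+b+1, then c is odd; if c + m = a+b, then c is even; and if c + m = a+b+1 with m >= 3, then c is even. -/
open Polynomial

lemma coeffXmul (n k m : ℕ) :
    ((X : Polynomial (ZMod 2)) ^ n * (X + 1) ^ k).coeff m =
      if n ≤ m then ((k.choose (m - n) : ℕ) : ZMod 2) else 0 := by
  rw [mul_comm, Polynomial.coeff_mul_X_pow']
  split
  · rw [coeff_X_add_one_pow]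
  · rfl

lemma monX1 : ((X : Polynomial (ZMod 2)) + 1).Monic := by
  simpa using monic_X_add_C (1 : ZMod 2)

lemma monXmul (n k : ℕ) : ((X : Polynomial (ZMod 2)) ^ n * (X + 1) ^ k).Monic :=
  (monic_X_pow n).mul (monX1.pow k)

lemma degXmul (n k : ℕ) : ((X : Polynomial (ZMod 2)) ^ n * (X + 1) ^ k).natDegree = n + k := by
  rw [natDegree_mul (monic_X_pow n).ne_zero (monX1.pow k).ne_zero, natDegree_pow, natDegree_pow]
  have h1 : ((X : Polynomial (ZMod 2)) + 1).natDegree = 1 := by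
    simpa using natDegree_X_add_C (1 : ZMod 2)
  rw [natDegree_X, h1]
  ring

lemma chooseEven {n l : ℕ} (hn : Even n) (hl : Odd l) : ((n.choose l : ℕ) : ZMod 2) = 0 := by
  have hl1 : 1 ≤ l := hl.pos
  have key : n.choose l * l = n * (n - 1).choose (l - 1) := by
    rcases n with _ | n'
    · simp [Nat.choose_eq_zero_of_lt hl1]
    · have h2 := Nat.add_one_mul_choose_eq n' (l - 1)
      have h3 : l - 1 + 1 = l := by omega
      rw [h3] at h2
      simpa [Nat.succ_sub_one, mul_comm] using h2.symm
  have heven : Even (n.choose l) := by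
    have hE : Even (n.choose l * l) := by
      rw [key]; exact hn.mul_right _
    rcases Nat.even_mul.mp hE with hE' | hE'
    · exact hE'
    · exact absurd hE' (Nat.not_even_iff_odd.mpr hl)
  obtain ⟨t, ht⟩ := heven
  have hcast : (n.choose l : ZMod 2) = ((2 * t : ℕ) : ZMod 2) := by rw [ht]; push_cast; ring
  rw [hcast]; push_cast
  rw [show (2 : ZMod 2) = 0 from rfl]; ring

lemma mersMonic (n k : ℕ) (hnk : 0 < n + k) :
    (1 + (X : Polynomial (ZMod 2)) ^ n * (X + 1) ^ k).Monic ∧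
    (1 + (X : Polynomial (ZMod 2)) ^ n * (X + 1) ^ k).natDegree = n + k := by
  have hT := monXmul n k
  have hd := degXmul n k
  have hlt : (1 : Polynomial (ZMod 2)).degree < ((X : Polynomial (ZMod 2)) ^ n * (X + 1) ^ k).degree := by
    rw [degree_one, degree_eq_natDegree hT.ne_zero, hd]
    exact_mod_cast hnk
  have hdeq : (1 + (X : Polynomial (ZMod 2)) ^ n * (X + 1) ^ k).degree
      = ((X : Polynomial (ZMod 2)) ^ n * (X + 1) ^ k).degree :=
    degree_add_eq_right_of_degree_lt hlt
  exact ⟨hT.add_of_right hlt, by rw [← hd]; exact natDegree_eq_of_degree_eq (by rw [hdeq])⟩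

lemma sigma_formula (T : Polynomial (ZMod 2)) (hT : T ≠ 0) (n : ℕ) :
    sigmaPow (1 + T) n =
      ∑ j ∈ Finset.range (n + 1), (((n + 1).choose (j + 1) : ℕ) : Polynomial (ZMod 2)) * T ^ j := by
  apply mul_left_cancel₀ hT
  have g := geom_sum_mul (1 + T) (n + 1)
  have h1 : (1 + T) - 1 = T := by ring
  rw [h1] at g
  have hL : T * sigmaPow (1 + T) n = (1 + T) ^ (n + 1) - 1 := by
    rw [sigmaPow, mul_comm]; exact g
  rw [hL, Finset.mul_sum]
  have hexp : (1 + T) ^ (n + 1) =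
      ∑ k ∈ Finset.range (n + 2), T ^ k * ((n + 1).choose k : Polynomial (ZMod 2)) := by
    rw [add_comm, add_pow]; simp
  rw [hexp, Finset.sum_range_succ']
  simp only [pow_zero, Nat.choose_zero_right, Nat.cast_one, one_mul]
  rw [add_sub_cancel_right]
  exact Finset.sum_congr rfl fun j _ => by ring

lemma sigma_monic (a b n : ℕ) (hab : 0 < a + b) :
    (sigmaPow (1 + (X : Polynomial (ZMod 2)) ^ a * (X + 1) ^ b) n).Monic ∧
    (sigmaPow (1 + (X : Polynomial (ZMod 2)) ^ a * (X + 1) ^ b) n).natDegree = n * (a + b) := by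
  set M : Polynomial (ZMod 2) := 1 + (X : Polynomial (ZMod 2)) ^ a * (X + 1) ^ b with hMdef
  obtain ⟨hMm, hMd⟩ := mersMonic a b hab
  have hMpd : ∀ i : ℕ, (M ^ i).natDegree = i * (a + b) := fun i => by
    rw [natDegree_pow, hMd]
  have hlt : (∑ i ∈ Finset.range n, M ^ i).degree < (M ^ n).degree := by
    rw [degree_eq_natDegree (hMm.pow n).ne_zero, hMpd]
    apply lt_of_le_of_lt (degree_sum_le _ _)
    rw [Finset.sup_lt_iff (by exact WithBot.bot_lt_coe _)]
    intro i hi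
    rw [degree_eq_natDegree (hMm.pow i).ne_zero, hMpd]
    exact_mod_cast Nat.mul_lt_mul_of_lt_of_le (Finset.mem_range.mp hi) le_rfl hab
  have hsum : sigmaPow M n = (∑ i ∈ Finset.range n, M ^ i) + M ^ n := by
    rw [sigmaPow, Finset.sum_range_succ]
  constructor
  · rw [hsum]; exact (hMm.pow n).add_of_right hlt
  · rw [hsum, ← hMpd n]
    exact natDegree_eq_of_degree_eq (degree_add_eq_right_of_degree_lt hlt)

-- arithmetic helpers (linear once products are instantiated)
lemma arith1 {jv kv dv l e : ℕ} (h1 : jv ≤ kv) (h2 : dv = kv + 2 * e) (h3 : l ≤ e)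
    (h4 : 1 ≤ e) : jv < dv - l := by omega

lemma arith2 {dv pv e l : ℕ} (h : dv = pv + e) (hl : l < e) : pv < dv - l := by omega

lemma arith3 {A B l : ℕ} (hl : l ≤ B) : A ≤ A + B - l := by omega

lemma arith4 {A B l : ℕ} (hl : l ≤ B) : A + B - l - A = B - l := by omega

lemma arith5 {A B l e : ℕ} (h1 : B < l) (h2 : l ≤ e) (h3 : e ≤ A + B) : A + B - l < A := by
  omega

/-- Coefficient of `σ(M^{k+2})` (k even) at `x^((k+2)(a+b) - l)` for `l ≤ a+b`. -/
lemma sigma_coeff (k a b : ℕ) (hkeven : Even k) (hab : 2 ≤ a + b) (l : ℕ) (hl : l ≤ a + b) :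
    (sigmaPow (1 + (X : Polynomial (ZMod 2)) ^ a * (X + 1) ^ b) (k + 1 + 1)).coeff
        ((k + 1 + 1) * (a + b) - l)
      = (((k + 1 + 1) * b).choose l : ZMod 2) + (if l = a + b then 1 else 0) := by
  set T : Polynomial (ZMod 2) := (X : Polynomial (ZMod 2)) ^ a * (X + 1) ^ b with hTdef
  have hTm : T.Monic := monXmul a b
  have hTd : T.natDegree = a + b := degXmul a b
  have hTpd : ∀ i : ℕ, (T ^ i).natDegree = i * (a + b) := fun i => by
    rw [natDegree_pow, hTd]
  set N : ℕ := (k + 1 + 1) * (a + b) - l with hNdef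
  have hDsplit : (k + 1 + 1) * (a + b) = k * (a + b) + 2 * (a + b) := by ring
  have hcast3 : ((k + 1 + 1 + 1 : ℕ) : ZMod 2) = 1 := by
    obtain ⟨t, ht⟩ := hkeven
    rw [ht]; push_cast
    have : ((t : ZMod 2) + t + 1 + 1 + 1) = 2 * t + 2 * 1 + 1 := by ring
    rw [this, show (2 : ZMod 2) = 0 from rfl]
    ring
  rw [sigma_formula T hTm.ne_zero (k + 1 + 1), finset_sum_coeff,
    Finset.sum_range_succ, Finset.sum_range_succ]
  have hzero : ∀ j ∈ Finset.range (k + 1),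
      ((((k + 1 + 1 + 1).choose (j + 1) : ℕ) : Polynomial (ZMod 2)) * T ^ j).coeff N = 0 := by
    intro j hj
    have hj' : j ≤ k := by have := Finset.mem_range.mp hj; omega
    rw [← map_natCast (C : ZMod 2 →+* Polynomial (ZMod 2)), coeff_C_mul]
    have hmul : j * (a + b) ≤ k * (a + b) := Nat.mul_le_mul_right _ hj'
    have hdlt : (T ^ j).natDegree < N := by
      rw [hTpd]; omega
    rw [coeff_eq_zero_of_natDegree_lt hdlt, mul_zero]
  rw [Finset.sum_eq_zero hzero, zero_add]
  have hx1 : (k + 1) * (a + b) = k * (a + b) + (a + b) := by ring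
  -- term j = k+1
  have hterm1 : ((((k + 1 + 1 + 1).choose (k + 1 + 1) : ℕ) : Polynomial (ZMod 2)) * T ^ (k + 1)).coeff N
      = (if l = a + b then 1 else 0) := by
    rw [← map_natCast (C : ZMod 2 →+* Polynomial (ZMod 2)), coeff_C_mul]
    have hch : (k + 1 + 1 + 1).choose (k + 1 + 1) = k + 1 + 1 + 1 :=
      Nat.choose_succ_self_right (k + 1 + 1)
    rw [hch, hcast3, one_mul]
    by_cases hld : l = a + b
    · have hNd : N = (T ^ (k + 1)).natDegree := by
        rw [hTpd]; omega
      rw [hNd, (hTm.pow (k + 1)).coeff_natDegree, if_pos hld]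
    · have hdlt : (T ^ (k + 1)).natDegree < N := by
        rw [hTpd]
        have hl' : l < a + b := by omega
        omega
      rw [coeff_eq_zero_of_natDegree_lt hdlt, if_neg hld]
  -- term j = k+2
  have hterm2 : ((((k + 1 + 1 + 1).choose (k + 1 + 1 + 1) : ℕ) : Polynomial (ZMod 2)) * T ^ (k + 1 + 1)).coeff N
      = (((k + 1 + 1) * b).choose l : ZMod 2) := by
    rw [← map_natCast (C : ZMod 2 →+* Polynomial (ZMod 2)), coeff_C_mul, Nat.choose_self,
      Nat.cast_one, one_mul]
    have hTpow : T ^ (k + 1 + 1)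
        = (X : Polynomial (ZMod 2)) ^ ((k + 1 + 1) * a) * (X + 1) ^ ((k + 1 + 1) * b) := by
      rw [hTdef, mul_pow, mul_comm (k + 1 + 1) a, mul_comm (k + 1 + 1) b, pow_mul, pow_mul]
    rw [hTpow, coeffXmul]
    have hNsum : N = (k + 1 + 1) * a + (k + 1 + 1) * b - l := by
      have : (k + 1 + 1) * (a + b) = (k + 1 + 1) * a + (k + 1 + 1) * b := by ring
      omega
    have he : a + b ≤ (k + 1 + 1) * a + (k + 1 + 1) * b := by
      have h2 : 1 * (a + b) ≤ (k + 1 + 1) * (a + b) :=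
        Nat.mul_le_mul_right _ (by omega)
      have h3 : (k + 1 + 1) * (a + b) = (k + 1 + 1) * a + (k + 1 + 1) * b := by ring
      omega
    by_cases hlv : l ≤ (k + 1 + 1) * b
    · rw [if_pos (by omega),
        show N - (k + 1 + 1) * a = (k + 1 + 1) * b - l from by omega,
        Nat.choose_symm hlv]
    · rw [if_neg (by omega)]
      rw [Nat.choose_eq_zero_of_lt (by omega), Nat.cast_zero]
  rw [hterm1, hterm2]
  ring

theorem stmt_8
    (h a b : ℕ) (hh : 2 ≤ h) (hp : Nat.Prime (2 * h + 1))
    (ha : 1 ≤ a) (hb : 1 ≤ b) (hab5 : 5 ≤ a + b)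
    (M : Polynomial (ZMod 2)) (hM : M = 1 + X ^ a * (X + 1) ^ b)
    (hMirr : Irreducible M)
    (J : Finset ℕ) (aj bj : ℕ → ℕ)
    (haj : ∀ j ∈ J, 1 ≤ aj j) (hbj : ∀ j ∈ J, 1 ≤ bj j)
    (hMjirr : ∀ j ∈ J, Irreducible (1 + X ^ aj j * (X + 1) ^ bj j : Polynomial (ZMod 2)))
    (hdistinct : ∀ i ∈ J, ∀ j ∈ J, i ≠ j →
      (1 + X ^ aj i * (X + 1) ^ bj i : Polynomial (ZMod 2)) ≠
        1 + X ^ aj j * (X + 1) ^ bj j)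
    (hfact : sigmaPow M (2 * h) = ∏ j ∈ J, (1 + X ^ aj j * (X + 1) ^ bj j))
    (u v : ℕ) (hu : u = ∑ j ∈ J, aj j) (hv : v = ∑ j ∈ J, bj j)
    (hueven : Even u) (hveven : Even v)
    (U W R : Polynomial (ZMod 2)) (c : ℕ)
    (hU : U = X ^ u * (X + 1) ^ v)
    (hW : W = U + sigmaPow M (2 * h) + 1)
    (hc : c = 2 * h * (a + b) - W.natDegree)
    (hR : R = sigmaPow M (2 * h - 1) + W)
    (hW0 : W ≠ 0) (m : ℕ) (hmodd : Odd m) (hmpos : 0 < m) :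
    (c = a + b + 1 → Odd c) ∧
    (c + m = a + b → Even c) ∧
    (c + m = a + b + 1 → 3 ≤ m → Even c) := by
  have hab2 : 2 ≤ a + b := by omega
  obtain ⟨k, hk⟩ : ∃ k, 2 * h = k + 1 + 1 := ⟨2 * h - 2, by omega⟩
  have hkeven : Even k := ⟨h - 1, by omega⟩
  -- degree of sigma
  obtain ⟨hσm, hσd⟩ := sigma_monic a b (2 * h) (by omega)
  rw [← hM] at hσm hσd
  -- degree of product
  have hprodd : (∏ j ∈ J, (1 + X ^ aj j * (X + 1) ^ bj j : Polynomial (ZMod 2))).natDegree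
      = u + v := by
    rw [Polynomial.natDegree_prod _ _
      (fun j hj => (mersMonic (aj j) (bj j) (by have := haj j hj; omega)).1.ne_zero)]
    rw [hu, hv, ← Finset.sum_add_distrib]
    exact Finset.sum_congr rfl fun j hj =>
      (mersMonic (aj j) (bj j) (by have := haj j hj; omega)).2
  have huv : u + v = 2 * h * (a + b) := by rw [← hprodd, ← hfact, hσd]
  -- coefficient of sigma
  have hσc : ∀ l ≤ a + b, (sigmaPow M (2 * h)).coeff (2 * h * (a + b) - l)
      = ((2 * h * b).choose l : ZMod 2) + (if l = a + b then 1 else 0) := by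
    intro l hl
    have hsc := sigma_coeff k a b hkeven hab2 l hl
    rw [← hk, ← hM] at hsc
    exact hsc
  -- coefficient of U
  have hUc : ∀ l ≤ a + b, U.coeff (2 * h * (a + b) - l) = (v.choose l : ZMod 2) := by
    intro l hl
    rw [hU, coeffXmul]
    have hD4 : 4 * (a + b) ≤ 2 * h * (a + b) := Nat.mul_le_mul_right _ (by omega)
    by_cases hlv : l ≤ v
    · rw [if_pos (by omega), show 2 * h * (a + b) - l - u = v - l from by omega,
        Nat.choose_symm hlv]
    · rw [if_neg (by omega), Nat.choose_eq_zero_of_lt (by omega), Nat.cast_zero]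
  -- degree of W
  have hUd : U.natDegree = u + v := by rw [hU]; exact degXmul u v
  have hWle : W.natDegree ≤ 2 * h * (a + b) := by
    rw [hW]
    refine le_trans (natDegree_add_le _ _) (max_le ?_ ?_)
    · refine le_trans (natDegree_add_le _ _) (max_le ?_ ?_)
      · rw [hUd]; omega
      · rw [hσd]
    · rw [natDegree_one]; omega
  have hD4 : 4 * (a + b) ≤ 2 * h * (a + b) := Nat.mul_le_mul_right _ (by omega)
  have hDc : 2 * h * (a + b) - c = W.natDegree := by omega
  have hWlead : W.coeff (2 * h * (a + b) - c) = 1 := by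
    rw [hDc]
    have h1 : W.leadingCoeff ≠ 0 := leadingCoeff_ne_zero.mpr hW0
    have h2 : W.leadingCoeff = 1 := by
      revert h1; generalize W.leadingCoeff = x; revert x; decide
    rw [Polynomial.coeff_natDegree]; exact h2
  -- coefficient of W
  have hWc : ∀ l ≤ a + b, W.coeff (2 * h * (a + b) - l)
      = (v.choose l : ZMod 2) + ((2 * h * b).choose l : ZMod 2)
        + (if l = a + b then 1 else 0) := by
    intro l hl
    rw [hW, coeff_add, coeff_add, hUc l hl, hσc l hl, coeff_one,
      if_neg (show ¬ (2 * h * (a + b) - l = 0) from by omega)]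
    ring
  have h2hbEven : Even (2 * h * b) := ⟨h * b, by ring⟩
  -- parity engine: any c < a+b must be even
  have hev : c < a + b → Even c := by
    intro hlt
    by_contra hodd
    have hoddc : Odd c := Nat.not_even_iff_odd.mp hodd
    have h1 := hWc c (le_of_lt hlt)
    rw [chooseEven hveven hoddc, chooseEven h2hbEven hoddc, if_neg (by omega), hWlead] at h1
    exact absurd h1 (by decide)
  refine ⟨?_, fun hcm => hev (by omega), fun hcm hm3 => hev (by omega)⟩
  intro hc1
  have habeven : Even (a + b) := by
    by_contra hne
    have hoddab : Odd (a + b) := Nat.not_even_iff_odd.mp hne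
    have hlt : W.natDegree < 2 * h * (a + b) - (a + b) := by omega
    have h0 : W.coeff (2 * h * (a + b) - (a + b)) = 0 := coeff_eq_zero_of_natDegree_lt hlt
    have h1 := hWc (a + b) le_rfl
    rw [chooseEven hveven hoddab, chooseEven h2hbEven hoddab, if_pos rfl, h0] at h1
    exact absurd h1 (by decide)
  rw [hc1]
  exact habeven.add_one
end

section
/- Assume W != 0, c is even, and let m be the least odd positive integer with alpha_m(W) = 1 (assumed to exist). If c + m < a+b, then alpha_{c+m}(U) = 1. -/
open Polynomial

lemma sq_coeff_odd_s16 (g : Polynomial (ZMod 2)) {n : ℕ} (hn : Odd n) :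
    (g ^ 2).coeff n = 0 := by
  obtain ⟨k, rfl⟩ := hn
  rw [← Polynomial.map_frobenius_expand 2 g, Polynomial.coeff_map,
    Polynomial.coeff_expand (by norm_num : 0 < 2), if_neg (by omega)]
  simp

lemma x1_monic (b : ℕ) : ((X + 1) ^ b : Polynomial (ZMod 2)).Monic := by
  simpa using (monic_X_add_C (1 : ZMod 2)).pow b

lemma xab_monic (a b : ℕ) : (X ^ a * (X + 1) ^ b : Polynomial (ZMod 2)).Monic :=
  (monic_X_pow a).mul (x1_monic b)

lemma xab_natDegree (a b : ℕ) :
    (X ^ a * (X + 1) ^ b : Polynomial (ZMod 2)).natDegree = a + b := by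
  have h1 : (X + 1 : Polynomial (ZMod 2)).natDegree = 1 := by
    simpa using natDegree_X_add_C (1 : ZMod 2)
  rw [natDegree_mul (monic_X_pow a).ne_zero (x1_monic b).ne_zero,
    natDegree_X_pow, natDegree_pow, h1, mul_one]

lemma mersenne_natDegree (a b : ℕ) (h : 0 < a + b) :
    (1 + X ^ a * (X + 1) ^ b : Polynomial (ZMod 2)).natDegree = a + b := by
  rw [natDegree_add_eq_right_of_natDegree_lt (by simpa [xab_natDegree] using h),
    xab_natDegree]

lemma mersenne_monic (a b : ℕ) (h : 0 < a + b) :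
    (1 + X ^ a * (X + 1) ^ b : Polynomial (ZMod 2)).Monic := by
  refine (xab_monic a b).add_of_right ?_
  rw [degree_eq_natDegree (xab_monic a b).ne_zero, xab_natDegree]
  calc (1 : Polynomial (ZMod 2)).degree ≤ 0 := degree_one_le
    _ < ((a + b : ℕ) : WithBot ℕ) := by exact_mod_cast h

theorem stmt_16
    (h a b : ℕ) (hh : 2 ≤ h) (hp : Nat.Prime (2 * h + 1))
    (ha : 1 ≤ a) (hb : 1 ≤ b) (hab5 : 5 ≤ a + b)
    (M : Polynomial (ZMod 2)) (hM : M = 1 + X ^ a * (X + 1) ^ b)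
    (hMirr : Irreducible M)
    (J : Finset ℕ) (aj bj : ℕ → ℕ)
    (haj : ∀ j ∈ J, 1 ≤ aj j) (hbj : ∀ j ∈ J, 1 ≤ bj j)
    (hMjirr : ∀ j ∈ J, Irreducible (1 + X ^ aj j * (X + 1) ^ bj j : Polynomial (ZMod 2)))
    (hdistinct : ∀ i ∈ J, ∀ j ∈ J, i ≠ j →
      (1 + X ^ aj i * (X + 1) ^ bj i : Polynomial (ZMod 2)) ≠
        1 + X ^ aj j * (X + 1) ^ bj j)
    (hfact : sigmaPow M (2 * h) = ∏ j ∈ J, (1 + X ^ aj j * (X + 1) ^ bj j))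
    (u v : ℕ) (hu : u = ∑ j ∈ J, aj j) (hv : v = ∑ j ∈ J, bj j)
    (U W R : Polynomial (ZMod 2)) (c : ℕ)
    (hU : U = X ^ u * (X + 1) ^ v)
    (hW : W = U + sigmaPow M (2 * h) + 1)
    (hc : c = 2 * h * (a + b) - W.natDegree)
    (hR : R = sigmaPow M (2 * h - 1) + W)
    (hW0 : W ≠ 0) (hceven : Even c)
    (m : ℕ) (hmodd : Odd m) (hmpos : 0 < m) (hmW : alpha m W = 1)
    (hmleast : ∀ k, Odd k → 0 < k → alpha k W = 1 → m ≤ k)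
    (hcm : c + m < a + b) :
    alpha (c + m) U = 1 := by
  -- basic degree facts
  have hMmonic : M.Monic := by rw [hM]; exact mersenne_monic a b (by omega)
  have hMdeg : M.natDegree = a + b := by rw [hM]; exact mersenne_natDegree a b (by omega)
  have hMpow : ∀ n : ℕ, (M ^ n).natDegree = n * (a + b) := fun n => by
    rw [hMmonic.natDegree_pow, hMdeg]
  have hts : (2 * h - 1) * (a + b) + (a + b) = 2 * h * (a + b) := by
    rw [← Nat.succ_mul]
    congr 1
    omega
  have hmul : a + b ≤ 2 * h * (a + b) := Nat.le_mul_of_pos_left _ (by omega)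
  -- decomposition of sigma
  have hdecomp : sigmaPow M (2 * h) = sigmaPow M (2 * h - 1) + M ^ (2 * h) := by
    have h1 : 2 * h + 1 = (2 * h - 1 + 1) + 1 := by omega
    have h2 : 2 * h - 1 + 1 = 2 * h := by omega
    rw [sigmaPow, sigmaPow, h1, Finset.sum_range_succ, h2]
  have hσlow : (sigmaPow M (2 * h - 1)).natDegree ≤ (2 * h - 1) * (a + b) := by
    refine natDegree_sum_le_of_forall_le _ _ fun i hi => ?_
    rw [hMpow]
    exact Nat.mul_le_mul_right _ (by simpa using Nat.lt_succ_iff.mp (Finset.mem_range.mp hi))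
  have hσdeg : (sigmaPow M (2 * h)).natDegree = 2 * h * (a + b) := by
    rw [hdecomp, natDegree_add_eq_right_of_natDegree_lt, hMpow]
    rw [hMpow]
    omega
  -- u + v = 2h(a+b)
  have hfdeg : ∀ j ∈ J, (1 + X ^ aj j * (X + 1) ^ bj j : Polynomial (ZMod 2)).natDegree
      = aj j + bj j := fun j hj => mersenne_natDegree _ _ (by have := haj j hj; omega)
  have hfne : ∀ j ∈ J, (1 + X ^ aj j * (X + 1) ^ bj j : Polynomial (ZMod 2)) ≠ 0 := by
    intro j hj h0
    have := hfdeg j hj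
    rw [h0, natDegree_zero] at this
    have := haj j hj
    omega
  have huv : u + v = 2 * h * (a + b) := by
    have := congrArg natDegree hfact
    rw [hσdeg, natDegree_prod _ _ hfne, Finset.sum_congr rfl hfdeg,
      Finset.sum_add_distrib, ← hu, ← hv] at this
    omega
  have hUdeg : U.natDegree = u + v := by rw [hU]; exact xab_natDegree u v
  -- degree of W
  have hWle : W.natDegree ≤ 2 * h * (a + b) := by
    rw [hW]
    refine (natDegree_add_le _ _).trans (max_le ?_ (by simp))
    exact (natDegree_add_le _ _).trans (max_le (by omega) (by omega))
  have hWdeg : W.natDegree = 2 * h * (a + b) - c := by omega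
  -- the key exponent
  set N := 2 * h * (a + b) - (c + m) with hN
  have hNodd : Odd N := by
    obtain ⟨e, he⟩ := hceven
    obtain ⟨o, ho⟩ := hmodd
    have h2 : 2 * (h * (a + b)) = 2 * h * (a + b) := by ring
    exact ⟨h * (a + b) - e - o - 1, by omega⟩
  have hσN : (sigmaPow M (2 * h)).coeff N = 0 := by
    rw [hdecomp, coeff_add]
    have h1 : (sigmaPow M (2 * h - 1)).coeff N = 0 :=
      coeff_eq_zero_of_natDegree_lt (by omega)
    have hsq : M ^ (2 * h) = (M ^ h) ^ 2 := by rw [← pow_mul, mul_comm]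
    have h2 : (M ^ (2 * h)).coeff N = 0 := by rw [hsq]; exact sq_coeff_odd_s16 _ hNodd
    rw [h1, h2, add_zero]
  -- conclude
  have hcoeff := congrArg (fun p => p.coeff N) hW
  simp only [coeff_add] at hcoeff
  have h1N : (1 : Polynomial (ZMod 2)).coeff N = 0 := by
    rw [coeff_one, if_neg (by omega)]
  rw [hσN, h1N, add_zero, add_zero] at hcoeff
  have hWN : W.coeff N = 1 := by
    have heq : W.natDegree - m = N := by omega
    rw [alpha, heq] at hmW
    exact hmW
  rw [alpha, hUdeg]
  have : u + v - (c + m) = N := by omega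
  rw [this, ← hcoeff, hWN]
end

section
/- Assume W != 0, c is even, and let m be the least odd positive integer with alpha_m(W) = 1 (assumed to exist). If c < a+b, a+b is odd, and c + m > a+b, then alpha_{a+b-c}(R) = 1. -/
open Polynomial

lemma xpow_aux (a b : ℕ) :
    ((X : Polynomial (ZMod 2)) ^ a * (X + 1) ^ b).Monic ∧
      ((X : Polynomial (ZMod 2)) ^ a * (X + 1) ^ b).natDegree = a + b := by
  have he : ((X : Polynomial (ZMod 2)) + 1) = X + C 1 := by simp
  have hx1 : ((X : Polynomial (ZMod 2)) + 1).Monic := by rw [he]; exact monic_X_add_C 1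
  have hx1d : ((X : Polynomial (ZMod 2)) + 1).natDegree = 1 := by
    rw [he]; exact natDegree_X_add_C 1
  have hm : ((X : Polynomial (ZMod 2)) ^ a * (X + 1) ^ b).Monic :=
    (monic_X_pow a).mul (hx1.pow b)
  refine ⟨hm, ?_⟩
  rw [(monic_X_pow a).natDegree_mul (hx1.pow b), natDegree_X_pow, natDegree_pow, hx1d, mul_one]

lemma mers_aux (a b : ℕ) (ha : 1 ≤ a) :
    ((1 : Polynomial (ZMod 2)) + X ^ a * (X + 1) ^ b).Monic ∧
      ((1 : Polynomial (ZMod 2)) + X ^ a * (X + 1) ^ b).natDegree = a + b := by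
  obtain ⟨hm, hd⟩ := xpow_aux a b
  have hlt : ((1 : Polynomial (ZMod 2))).natDegree < ((X : Polynomial (ZMod 2)) ^ a * (X + 1) ^ b).natDegree := by
    rw [natDegree_one, hd]; omega
  have hcomm : (1 : Polynomial (ZMod 2)) + X ^ a * (X + 1) ^ b = X ^ a * (X + 1) ^ b + 1 :=
    add_comm _ _
  constructor
  · rw [hcomm]; exact hm.add_of_left (degree_lt_degree hlt)
  · rw [hcomm, natDegree_add_eq_left_of_natDegree_lt hlt, hd]

lemma sigmaPow_aux (P : Polynomial (ZMod 2)) (hP : P.Monic) (hd : 0 < P.natDegree) (n : ℕ) :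
    (sigmaPow P n).Monic ∧ (sigmaPow P n).natDegree = n * P.natDegree := by
  induction n with
  | zero => simp [sigmaPow]
  | succ n ih =>
    have hs : sigmaPow P (n + 1) = sigmaPow P n + P ^ (n + 1) := by
      rw [sigmaPow, Finset.sum_range_succ]; rfl
    have hpm : (P ^ (n + 1)).Monic := hP.pow _
    have hpd : (P ^ (n + 1)).natDegree = (n + 1) * P.natDegree := by
      rw [natDegree_pow]
    have hlt : (sigmaPow P n).natDegree < (P ^ (n + 1)).natDegree := by
      rw [ih.2, hpd]
      exact Nat.mul_lt_mul_of_lt_of_le (Nat.lt_succ_self n) le_rfl hd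
    constructor
    · rw [hs]; exact hpm.add_of_right (degree_lt_degree hlt)
    · rw [hs, natDegree_add_eq_right_of_natDegree_lt hlt, hpd]

theorem stmt_17
    (h a b : ℕ) (hh : 2 ≤ h) (hp : Nat.Prime (2 * h + 1))
    (ha : 1 ≤ a) (hb : 1 ≤ b) (hab5 : 5 ≤ a + b)
    (M : Polynomial (ZMod 2)) (hM : M = 1 + X ^ a * (X + 1) ^ b)
    (hMirr : Irreducible M)
    (J : Finset ℕ) (aj bj : ℕ → ℕ)
    (haj : ∀ j ∈ J, 1 ≤ aj j) (hbj : ∀ j ∈ J, 1 ≤ bj j)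
    (hMjirr : ∀ j ∈ J, Irreducible (1 + X ^ aj j * (X + 1) ^ bj j : Polynomial (ZMod 2)))
    (hdistinct : ∀ i ∈ J, ∀ j ∈ J, i ≠ j →
      (1 + X ^ aj i * (X + 1) ^ bj i : Polynomial (ZMod 2)) ≠
        1 + X ^ aj j * (X + 1) ^ bj j)
    (hfact : sigmaPow M (2 * h) = ∏ j ∈ J, (1 + X ^ aj j * (X + 1) ^ bj j))
    (u v : ℕ) (hu : u = ∑ j ∈ J, aj j) (hv : v = ∑ j ∈ J, bj j)
    (U W R : Polynomial (ZMod 2)) (c : ℕ)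
    (hU : U = X ^ u * (X + 1) ^ v)
    (hW : W = U + sigmaPow M (2 * h) + 1)
    (hc : c = 2 * h * (a + b) - W.natDegree)
    (hR : R = sigmaPow M (2 * h - 1) + W)
    (hW0 : W ≠ 0) (hceven : Even c)
    (m : ℕ) (hmodd : Odd m) (hmpos : 0 < m) (hmW : alpha m W = 1)
    (hmleast : ∀ k, Odd k → 0 < k → alpha k W = 1 → m ≤ k)
    (hcab : c < a + b) (habodd : Odd (a + b)) (hcm : a + b < c + m) :
    alpha (a + b - c) R = 1 := by
  obtain ⟨hMm, hMd⟩ : M.Monic ∧ M.natDegree = a + b := by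
    rw [hM]; exact mers_aux a b ha
  have hMd0 : 0 < M.natDegree := by omega
  obtain ⟨hσm, hσd⟩ := sigmaPow_aux M hMm hMd0 (2 * h)
  obtain ⟨hσ'm, hσ'd⟩ := sigmaPow_aux M hMm hMd0 (2 * h - 1)
  -- degree of the product
  have hprodd : (∏ j ∈ J, ((1 : Polynomial (ZMod 2)) + X ^ aj j * (X + 1) ^ bj j)).natDegree
      = u + v := by
    rw [natDegree_prod_of_monic _ _ (fun j hj => (mers_aux (aj j) (bj j) (haj j hj)).1),
      hu, hv, ← Finset.sum_add_distrib]
    exact Finset.sum_congr rfl (fun j hj => (mers_aux (aj j) (bj j) (haj j hj)).2)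
  have huv : u + v = 2 * h * (a + b) := by
    rw [← hprodd, ← hfact, hσd, hMd]
  have hUd : U.natDegree = 2 * h * (a + b) := by
    rw [hU, (xpow_aux u v).2, huv]
  set N := 2 * h * (a + b) with hN
  have hNd : 4 * (a + b) ≤ N := by
    have := Nat.mul_le_mul_right (a + b) (show 4 ≤ 2 * h by omega)
    simpa using this
  have hWle : W.natDegree ≤ N := by
    rw [hW]
    refine le_trans (natDegree_add_le _ _) ?_
    have h1 : (U + sigmaPow M (2 * h)).natDegree ≤ N := by
      refine le_trans (natDegree_add_le _ _) ?_
      rw [hUd, hσd, hMd]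
      simp [hN]
    simp [natDegree_one, h1]
  have hWd : W.natDegree = N - c := by omega
  have hσ'd' : (sigmaPow M (2 * h - 1)).natDegree = N - (a + b) := by
    rw [hσ'd, hMd, hN, Nat.sub_mul, one_mul]
  have hlt : (sigmaPow M (2 * h - 1)).natDegree < W.natDegree := by
    rw [hσ'd', hWd]; omega
  have hRd : R.natDegree = N - c := by
    rw [hR, natDegree_add_eq_right_of_natDegree_lt hlt, hWd]
  have hσ'c : (sigmaPow M (2 * h - 1)).coeff (N - (a + b)) = 1 := by
    rw [← hσ'd']; exact hσ'm.coeff_natDegree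
  have hWc0 : W.coeff (N - (a + b)) = 0 := by
    have hodd : Odd (a + b - c) := by
      obtain ⟨k, hk⟩ := habodd; obtain ⟨l, hl⟩ := hceven
      exact ⟨k - l, by omega⟩
    have hne : alpha (a + b - c) W ≠ 1 := by
      intro hone
      have := hmleast _ hodd (by omega) hone
      omega
    have h0 : alpha (a + b - c) W = 0 := by
      have h2 : ∀ x : ZMod 2, x = 0 ∨ x = 1 := by decide
      rcases h2 (alpha (a + b - c) W) with hx | hx
      · exact hx
      · exact absurd hx hne
    rw [alpha, hWd] at h0
    have : N - c - (a + b - c) = N - (a + b) := by omega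
    rwa [this] at h0
  rw [alpha, hRd, hR, coeff_add]
  have hidx : N - c - (a + b - c) = N - (a + b) := by omega
  rw [hidx, hσ'c, hWc0, add_zero]
end
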